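/- Let F be a field of characteristic 0 and let a, b ∈ F× be such that (-a, -b)_F ≅ (-1, -1)_F as F-algebras. Then (-a, b)_F ≅ (-1, a)_F as F-algebras. -/

import Mathlib

open Quaternion

theorem aux_iso_stmt16 (F : Type) [Field F] [CharZero F] (c₁ c₂ d₁ d₂ : F)
    (hc₁ : c₁ ≠ 0) (hc₂ : c₂ ≠ 0)
    (q : QuaternionAlgebra.Basis ℍ[F,d₁,d₂] c₁ 0 c₂)
    (hi : q.i.re = 0) (hj : q.j.re = 0) :
    Nonempty (ℍ[F,c₁,c₂] ≃ₐ[F] ℍ[F,d₁,d₂]) := by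
  have hk : q.k.re = 0 := by
    have h1 : (q.i * q.j).re = (q.j * q.i).re := by
      rw [QuaternionAlgebra.re_mul, QuaternionAlgebra.re_mul, hi, hj]; ring
    rw [q.i_mul_j, q.j_mul_i] at h1
    simp only [QuaternionAlgebra.re_sub, QuaternionAlgebra.re_smul, smul_eq_mul, zero_mul, zero_sub] at h1
    linear_combination h1 / 2
  have hre : ∀ x : ℍ[F,c₁,c₂], (q.liftHom x).re
      = x.re + x.imI * q.i.re + x.imJ * q.j.re + x.imK * q.k.re := by
    intro x
    show (algebraMap F ℍ[F,d₁,d₂] x.re + x.imI • q.i + x.imJ • q.j + x.imK • q.k).re = _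
    simp [QuaternionAlgebra.coe_algebraMap]
  have hinj : Function.Injective q.liftHom := by
    rw [injective_iff_map_eq_zero]
    intro x hx
    have h0 : x.re = 0 := by
      have := hre x
      rw [hx] at this
      simpa [hi, hj, hk] using this.symm
    have hx' : x.imI • q.i + x.imJ • q.j + x.imK • q.k = 0 := by
      have : (algebraMap F ℍ[F,d₁,d₂]) x.re + x.imI • q.i + x.imJ • q.j + x.imK • q.k = 0 := hx
      rw [h0] at this; simpa using this
    have hI : x.imI = 0 := by
      have h2 : ((x.imI • q.i + x.imJ • q.j + x.imK • q.k) * q.i).re = 0 := by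
        rw [hx', zero_mul]; rfl
      rw [add_mul, add_mul, smul_mul_assoc, smul_mul_assoc, smul_mul_assoc,
        q.i_mul_i, q.j_mul_i, q.k_mul_i] at h2
      simp only [QuaternionAlgebra.re_add, QuaternionAlgebra.re_smul, smul_eq_mul,
        QuaternionAlgebra.re_one, QuaternionAlgebra.re_neg, neg_smul, hj, hk,
        QuaternionAlgebra.re_sub, zero_smul, QuaternionAlgebra.re_zero, hi] at h2
      field_simp at h2
      exact (mul_eq_zero.mp (by linear_combination h2 : x.imI * c₁ = 0)).resolve_right hc₁
    have hJ : x.imJ = 0 := by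
      have h2 : ((x.imI • q.i + x.imJ • q.j + x.imK • q.k) * q.j).re = 0 := by
        rw [hx', zero_mul]; rfl
      rw [add_mul, add_mul, smul_mul_assoc, smul_mul_assoc, smul_mul_assoc,
        q.i_mul_j, q.j_mul_j, q.k_mul_j] at h2
      simp only [QuaternionAlgebra.re_add, QuaternionAlgebra.re_smul, smul_eq_mul,
        QuaternionAlgebra.re_one, QuaternionAlgebra.re_neg, neg_smul, hi, hk,
        QuaternionAlgebra.re_sub, zero_smul, QuaternionAlgebra.re_zero, hj] at h2
      field_simp at h2
      exact (mul_eq_zero.mp (by linear_combination h2 : x.imJ * c₂ = 0)).resolve_right hc₂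
    have hK : x.imK = 0 := by
      have h2 : ((x.imI • q.i + x.imJ • q.j + x.imK • q.k) * q.k).re = 0 := by
        rw [hx', zero_mul]; rfl
      rw [add_mul, add_mul, smul_mul_assoc, smul_mul_assoc, smul_mul_assoc,
        q.i_mul_k, q.j_mul_k, q.k_mul_k] at h2
      simp only [QuaternionAlgebra.re_add, QuaternionAlgebra.re_smul, smul_eq_mul,
        QuaternionAlgebra.re_one, QuaternionAlgebra.re_neg, neg_smul, hi, hj,
        QuaternionAlgebra.re_smul, QuaternionAlgebra.re_sub, zero_smul, QuaternionAlgebra.re_zero, hk] at h2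
      field_simp at h2
      rcases mul_eq_zero.mp (by linear_combination -h2 : x.imK * (c₁ * c₂) = 0) with h | h
      · exact h
      · exact absurd h (mul_ne_zero hc₁ hc₂)
    ext <;> simp [h0, hI, hJ, hK]
  haveI : FiniteDimensional F ℍ[F,c₁,c₂] :=
    Module.Finite.of_basis (QuaternionAlgebra.basisOneIJK c₁ 0 c₂)
  haveI : FiniteDimensional F ℍ[F,d₁,d₂] :=
    Module.Finite.of_basis (QuaternionAlgebra.basisOneIJK d₁ 0 d₂)
  have hsurj : Function.Surjective q.liftHom := by
    have h4 : Module.finrank F ℍ[F,c₁,c₂] = Module.finrank F ℍ[F,d₁,d₂] := by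
      rw [QuaternionAlgebra.finrank_eq_four, QuaternionAlgebra.finrank_eq_four]
    exact (LinearMap.injective_iff_surjective_of_finrank_eq_finrank
      (f := q.liftHom.toLinearMap) h4).mp hinj
  exact ⟨AlgEquiv.ofBijective q.liftHom ⟨hinj, hsurj⟩⟩

theorem aux_pure_stmt16 (F : Type) [Field F] [CharZero F] (c₁ c₂ d₁ d₂ : F)
    (hc₁ : c₁ ≠ 0) (hc₂ : c₂ ≠ 0)
    (I J : ℍ[F,d₁,d₂]) (hI : I * I = c₁ • 1) (hJ : J * J = c₂ • 1)
    (hIJ : I * J = -(J * I)) : I.re = 0 := by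
  by_contra hre
  have e1 := congrArg QuaternionAlgebra.imI hI
  have e2 := congrArg QuaternionAlgebra.imJ hI
  have e3 := congrArg QuaternionAlgebra.imK hI
  simp only [QuaternionAlgebra.imI_mul, QuaternionAlgebra.imJ_mul, QuaternionAlgebra.imK_mul,
    QuaternionAlgebra.imI_smul, QuaternionAlgebra.imJ_smul, QuaternionAlgebra.imK_smul,
    QuaternionAlgebra.imI_one, QuaternionAlgebra.imJ_one, QuaternionAlgebra.imK_one,
    smul_eq_mul, mul_zero] at e1 e2 e3
  have hiI : I.imI = 0 := by
    have h2 : 2 * I.re * I.imI = 0 := by linear_combination e1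
    rcases mul_eq_zero.mp h2 with h | h
    · rcases mul_eq_zero.mp h with h' | h'
      · exact absurd h' two_ne_zero
      · exact absurd h' hre
    · exact h
  have hiJ : I.imJ = 0 := by
    have h2 : 2 * I.re * I.imJ = 0 := by linear_combination e2
    rcases mul_eq_zero.mp h2 with h | h
    · rcases mul_eq_zero.mp h with h' | h'
      · exact absurd h' two_ne_zero
      · exact absurd h' hre
    · exact h
  have hiK : I.imK = 0 := by
    have h2 : 2 * I.re * I.imK = 0 := by linear_combination e3
    rcases mul_eq_zero.mp h2 with h | h
    · rcases mul_eq_zero.mp h with h' | h'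
      · exact absurd h' two_ne_zero
      · exact absurd h' hre
    · exact h
  have f0 := congrArg QuaternionAlgebra.re hIJ
  have f1 := congrArg QuaternionAlgebra.imI hIJ
  have f2 := congrArg QuaternionAlgebra.imJ hIJ
  have f3 := congrArg QuaternionAlgebra.imK hIJ
  simp only [QuaternionAlgebra.re_mul, QuaternionAlgebra.imI_mul, QuaternionAlgebra.imJ_mul,
    QuaternionAlgebra.imK_mul, QuaternionAlgebra.re_neg, QuaternionAlgebra.imI_neg,
    QuaternionAlgebra.imJ_neg, QuaternionAlgebra.imK_neg, hiI, hiJ, hiK,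
    mul_zero, zero_mul, add_zero, zero_add, sub_zero, zero_sub, neg_neg] at f0 f1 f2 f3
  have hJ0 : J = 0 := by
    have g0 : J.re = 0 := by
      have : 2 * (I.re * J.re) = 0 := by linear_combination f0
      rcases mul_eq_zero.mp this with h | h
      · exact absurd h two_ne_zero
      · exact (mul_eq_zero.mp h).elim (fun h' => absurd h' hre) id
    have g1 : J.imI = 0 := by
      have : 2 * (I.re * J.imI) = 0 := by linear_combination f1
      rcases mul_eq_zero.mp this with h | h
      · exact absurd h two_ne_zero
      · exact (mul_eq_zero.mp h).elim (fun h' => absurd h' hre) id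
    have g2 : J.imJ = 0 := by
      have : 2 * (I.re * J.imJ) = 0 := by linear_combination f2
      rcases mul_eq_zero.mp this with h | h
      · exact absurd h two_ne_zero
      · exact (mul_eq_zero.mp h).elim (fun h' => absurd h' hre) id
    have g3 : J.imK = 0 := by
      have : 2 * (I.re * J.imK) = 0 := by linear_combination f3
      rcases mul_eq_zero.mp this with h | h
      · exact absurd h two_ne_zero
      · exact (mul_eq_zero.mp h).elim (fun h' => absurd h' hre) id
    ext <;> simp [g0, g1, g2, g3]
  rw [hJ0, mul_zero] at hJ
  have := congrArg QuaternionAlgebra.re hJ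
  simp at this
  exact hc₂ this.symm

set_option maxHeartbeats 2000000 in
theorem stmt16 (F : Type) [Field F] [CharZero F] (a b : F) (ha : a ≠ 0) (hb : b ≠ 0)
    (h : Nonempty (QuaternionAlgebra F (-a) 0 (-b) ≃ₐ[F] QuaternionAlgebra F (-1) 0 (-1))) :
    Nonempty (QuaternionAlgebra F (-a) 0 b ≃ₐ[F] QuaternionAlgebra F (-1) 0 a) := by
  have key : ∃ x₁ x₂ x₃ y₁ y₂ y₃ : F, x₁^2 + x₂^2 + x₃^2 = a ∧ y₁^2 + y₂^2 + y₃^2 = b ∧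
      x₁*y₁ + x₂*y₂ + x₃*y₃ = 0 := by
    obtain ⟨e⟩ := h
    have ha' : (-a : F) ≠ 0 := neg_ne_zero.mpr ha
    have hb' : (-b : F) ≠ 0 := neg_ne_zero.mpr hb
    let bs : QuaternionAlgebra.Basis ℍ[F,-1,-1] (-a) 0 (-b) :=
      (QuaternionAlgebra.Basis.self F).compHom e.toAlgHom
    set I := bs.i with hIdef
    set J := bs.j with hJdef
    have hI : I * I = (-a) • 1 := by rw [bs.i_mul_i, zero_smul, add_zero]
    have hJ : J * J = (-b) • 1 := bs.j_mul_j
    have hIJ : I * J = -(J * I) := by rw [bs.i_mul_j, bs.j_mul_i, zero_smul, zero_sub, neg_neg]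
    have hJI : J * I = -(I * J) := by rw [bs.i_mul_j, bs.j_mul_i, zero_smul, zero_sub]
    have hIre : I.re = 0 := aux_pure_stmt16 F (-a) (-b) (-1) (-1) ha' hb' I J hI hJ hIJ
    have hJre : J.re = 0 := aux_pure_stmt16 F (-b) (-a) (-1) (-1) hb' ha' J I hJ hI hJI
    refine ⟨I.imI, I.imJ, I.imK, J.imI, J.imJ, J.imK, ?_, ?_, ?_⟩
    · have := congrArg QuaternionAlgebra.re hI
      simp only [QuaternionAlgebra.re_mul, QuaternionAlgebra.re_smul, QuaternionAlgebra.re_one,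
        smul_eq_mul, mul_one, hIre] at this
      linear_combination -this
    · have := congrArg QuaternionAlgebra.re hJ
      simp only [QuaternionAlgebra.re_mul, QuaternionAlgebra.re_smul, QuaternionAlgebra.re_one,
        smul_eq_mul, mul_one, hJre] at this
      linear_combination -this
    · have := congrArg QuaternionAlgebra.re hIJ
      simp only [QuaternionAlgebra.re_mul, QuaternionAlgebra.re_neg, hIre, hJre] at this
      linear_combination -this/2
  clear h
  obtain ⟨x₁, x₂, x₃, y₁, y₂, y₃, ha2, hb2, hxy⟩ := key
  subst ha2; subst hb2
  rcases eq_or_ne x₁ 0 with hx1 | hx1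
  · -- case x₁ = 0
    subst hx1
    rw [show ((0:F)^2 + x₂^2 + x₃^2 : F) = x₂^2 + x₃^2 by ring] at ha ⊢
    have hxy' : x₂*y₂ + x₃*y₃ = 0 := by linear_combination hxy
    obtain ⟨s, hy2, hy3⟩ : ∃ s : F, y₂ = -(s*x₃) ∧ y₃ = s*x₂ := by
      refine ⟨(x₂*y₃ - x₃*y₂)/(x₂^2+x₃^2), ?_, ?_⟩
      · field_simp
        linear_combination x₂*hxy'
      · field_simp
        linear_combination x₃*hxy'
    subst hy2; subst hy3
    have k4 : -( ((x₂^2+x₃^2+1)/2)^2 ) + (x₂^2+x₃^2)*((x₂^2+x₃^2-1)*x₃/(2*(x₂^2+x₃^2)))^2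
        + (x₂^2+x₃^2)*((x₂^2+x₃^2-1)*x₂/(2*(x₂^2+x₃^2)))^2 = -(x₂^2+x₃^2) := by
      field_simp
      ring
    have k5 : -( ((x₂^2+x₃^2-1)*s/2)^2 )
        + (x₂^2+x₃^2)*((x₂*y₁ + x₃*(x₂^2+x₃^2+1)*s/2)/(x₂^2+x₃^2))^2
        + (x₂^2+x₃^2)*((x₂*(x₂^2+x₃^2+1)*s/2 - x₃*y₁)/(x₂^2+x₃^2))^2
        = y₁^2 + (-(s*x₃))^2 + (s*x₂)^2 := by
      field_simp
      ring
    have k6 : -( ((x₂^2+x₃^2+1)/2) * ((x₂^2+x₃^2-1)*s/2) )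
        + (x₂^2+x₃^2)*(((x₂^2+x₃^2-1)*x₃/(2*(x₂^2+x₃^2)))
            * ((x₂*y₁ + x₃*(x₂^2+x₃^2+1)*s/2)/(x₂^2+x₃^2)))
        + (x₂^2+x₃^2)*(((x₂^2+x₃^2-1)*x₂/(2*(x₂^2+x₃^2)))
            * ((x₂*(x₂^2+x₃^2+1)*s/2 - x₃*y₁)/(x₂^2+x₃^2))) = 0 := by
      field_simp
      ring
    set A : ℍ[F,-1,x₂^2+x₃^2] :=
      ⟨0, (x₂^2+x₃^2+1)/2, (x₂^2+x₃^2-1)*x₃/(2*(x₂^2+x₃^2)),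
        (x₂^2+x₃^2-1)*x₂/(2*(x₂^2+x₃^2))⟩ with hA
    set B : ℍ[F,-1,x₂^2+x₃^2] :=
      ⟨0, (x₂^2+x₃^2-1)*s/2, (x₂*y₁ + x₃*(x₂^2+x₃^2+1)*s/2)/(x₂^2+x₃^2),
        (x₂*(x₂^2+x₃^2+1)*s/2 - x₃*y₁)/(x₂^2+x₃^2)⟩ with hB
    have hAA : A * A = (-(x₂^2+x₃^2)) • 1 := by
      ext
      · rw [hA, QuaternionAlgebra.mk_mul_mk]
        dsimp only
        simp only [QuaternionAlgebra.re_smul, QuaternionAlgebra.re_one, smul_eq_mul, mul_one]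
        linear_combination k4
      all_goals rw [hA, QuaternionAlgebra.mk_mul_mk]
      all_goals try dsimp only
      all_goals simp only [QuaternionAlgebra.imI_smul, QuaternionAlgebra.imJ_smul,
        QuaternionAlgebra.imK_smul, QuaternionAlgebra.imI_one, QuaternionAlgebra.imJ_one,
        QuaternionAlgebra.imK_one, smul_eq_mul, mul_zero]
      all_goals ring
    have hBB : B * B = (y₁^2 + (-(s*x₃))^2 + (s*x₂)^2) • 1 := by
      ext
      · rw [hB, QuaternionAlgebra.mk_mul_mk]
        dsimp only
        simp only [QuaternionAlgebra.re_smul, QuaternionAlgebra.re_one, smul_eq_mul, mul_one]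
        linear_combination k5
      all_goals rw [hB, QuaternionAlgebra.mk_mul_mk]
      all_goals try dsimp only
      all_goals simp only [QuaternionAlgebra.imI_smul, QuaternionAlgebra.imJ_smul,
        QuaternionAlgebra.imK_smul, QuaternionAlgebra.imI_one, QuaternionAlgebra.imJ_one,
        QuaternionAlgebra.imK_one, smul_eq_mul, mul_zero]
      all_goals ring
    have hBA : B * A = -(A * B) := by
      ext
      all_goals rw [hA, hB]
      all_goals simp only [QuaternionAlgebra.mk_mul_mk, QuaternionAlgebra.re_neg,
        QuaternionAlgebra.imI_neg, QuaternionAlgebra.imJ_neg, QuaternionAlgebra.imK_neg]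
      all_goals try dsimp only
      · linear_combination 2 * k6
      all_goals ring
    exact aux_iso_stmt16 F (-(x₂^2+x₃^2)) (y₁^2 + (-(s*x₃))^2 + (s*x₂)^2) (-1) (x₂^2+x₃^2)
      (neg_ne_zero.mpr ha) hb ⟨A, B, A*B, by rw [hAA, zero_smul, add_zero], hBB, rfl, by rw [hBA, zero_smul, zero_sub]⟩ rfl rfl
  · -- case x₁ ≠ 0
    have k1 : -( ((x₁^2+x₂^2+x₃^2)/x₁)^2 ) + (x₁^2+x₂^2+x₃^2)*(x₂/x₁)^2
        + (x₁^2+x₂^2+x₃^2)*(x₃/x₁)^2 = -(x₁^2+x₂^2+x₃^2) := by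
      field_simp
      ring
    have k2 : -( ((x₂*y₃-x₃*y₂)/x₁)^2 ) + (x₁^2+x₂^2+x₃^2)*(y₃/x₁)^2
        + (x₁^2+x₂^2+x₃^2)*(-(y₂/x₁))^2 = y₁^2 + y₂^2 + y₃^2 := by
      field_simp
      linear_combination (x₂*y₂ + x₃*y₃ - x₁*y₁) * hxy
    have k3 : -( ((x₁^2+x₂^2+x₃^2)/x₁) * ((x₂*y₃-x₃*y₂)/x₁) )
        + (x₁^2+x₂^2+x₃^2)*((x₂/x₁)*(y₃/x₁))
        + (x₁^2+x₂^2+x₃^2)*((x₃/x₁)*(-(y₂/x₁))) = 0 := by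
      field_simp
      ring
    set A : ℍ[F,-1,x₁^2+x₂^2+x₃^2] :=
      ⟨0, (x₁^2+x₂^2+x₃^2)/x₁, x₂/x₁, x₃/x₁⟩ with hA
    set B : ℍ[F,-1,x₁^2+x₂^2+x₃^2] :=
      ⟨0, (x₂*y₃-x₃*y₂)/x₁, y₃/x₁, -(y₂/x₁)⟩ with hB
    have hAA : A * A = (-(x₁^2+x₂^2+x₃^2)) • 1 := by
      ext
      · rw [hA, QuaternionAlgebra.mk_mul_mk]
        dsimp only
        simp only [QuaternionAlgebra.re_smul, QuaternionAlgebra.re_one, smul_eq_mul, mul_one]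
        linear_combination k1
      all_goals rw [hA, QuaternionAlgebra.mk_mul_mk]
      all_goals try dsimp only
      all_goals simp only [QuaternionAlgebra.imI_smul, QuaternionAlgebra.imJ_smul,
        QuaternionAlgebra.imK_smul, QuaternionAlgebra.imI_one, QuaternionAlgebra.imJ_one,
        QuaternionAlgebra.imK_one, smul_eq_mul, mul_zero]
      all_goals ring
    have hBB : B * B = (y₁^2 + y₂^2 + y₃^2) • 1 := by
      ext
      · rw [hB, QuaternionAlgebra.mk_mul_mk]
        dsimp only
        simp only [QuaternionAlgebra.re_smul, QuaternionAlgebra.re_one, smul_eq_mul, mul_one]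
        linear_combination k2
      all_goals rw [hB, QuaternionAlgebra.mk_mul_mk]
      all_goals try dsimp only
      all_goals simp only [QuaternionAlgebra.imI_smul, QuaternionAlgebra.imJ_smul,
        QuaternionAlgebra.imK_smul, QuaternionAlgebra.imI_one, QuaternionAlgebra.imJ_one,
        QuaternionAlgebra.imK_one, smul_eq_mul, mul_zero]
      all_goals ring
    have hBA : B * A = -(A * B) := by
      ext
      all_goals rw [hA, hB]
      all_goals simp only [QuaternionAlgebra.mk_mul_mk, QuaternionAlgebra.re_neg,
        QuaternionAlgebra.imI_neg, QuaternionAlgebra.imJ_neg, QuaternionAlgebra.imK_neg]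
      all_goals try dsimp only
      · linear_combination 2 * k3
      all_goals ring
    exact aux_iso_stmt16 F (-(x₁^2+x₂^2+x₃^2)) (y₁^2 + y₂^2 + y₃^2) (-1) (x₁^2+x₂^2+x₃^2)
      (neg_ne_zero.mpr ha) hb ⟨A, B, A*B, by rw [hAA, zero_smul, add_zero], hBB, rfl, by rw [hBA, zero_smul, zero_sub]⟩ rfl rfl
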